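/- Let ♯ be an oriented group involution on RG with compatible orientation σ having kernel N of index 2. Then an element α ∈ RG is skew-symmetric (α♯ = −α) if and only if α is an R-linear combination of elements of the four sets: {α_n n : n ∈ N, n* = n, 2α_n = 0}, {n − n* : n ∈ N, n* ≠ n}, {x : x ∉ N, x* = x}, and {x + x* : x ∉ N, x* ≠ x}. -/

import Mathlib

/-- The oriented involution on the group ring. -/
noncomputable def orientedSharp {R : Type*} [CommRing R] {G : Type*} [Group G]
    (st : G → G) (σ : G →* ℤˣ) (α : MonoidAlgebra R G) : MonoidAlgebra R G :=
  Finsupp.sum α.coeff fun g r => MonoidAlgebra.single (st g) (((σ g : ℤ) : R) * r)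

section Aux
variable {R : Type*} [CommRing R] {G : Type*} [Group G]

lemma orientedSharp_apply (st : G → G) (hst2 : ∀ g : G, st (st g) = g) (σ : G →* ℤˣ)
    (α : MonoidAlgebra R G) (h : G) :
    (orientedSharp st σ α).coeff h = ((σ (st h) : ℤ) : R) * α.coeff (st h) := by
  classical
  unfold orientedSharp
  rw [Finsupp.sum, MonoidAlgebra.coeff_sum]
  rw [Finsupp.finsetSum_apply]
  rw [Finset.sum_eq_single (st h)]
  · simp [MonoidAlgebra.single_apply, hst2]
  · intro b hb hne
    have : st b ≠ h := fun hc => hne (by rw [← hc, hst2])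
    simp [MonoidAlgebra.single_apply, this]
  · intro hmem
    have : α.coeff (st h) = 0 := Finsupp.notMem_support_iff.mp hmem
    simp [this]

lemma skew_iff (st : G → G) (hst2 : ∀ g : G, st (st g) = g) (σ : G →* ℤˣ)
    (α : MonoidAlgebra R G) :
    orientedSharp st σ α = -α ↔ ∀ h, ((σ (st h) : ℤ) : R) * α.coeff (st h) = -α.coeff h := by
  rw [← MonoidAlgebra.coeff_inj, Finsupp.ext_iff]
  constructor
  · intro H h; rw [← orientedSharp_apply st hst2, H, MonoidAlgebra.coeff_neg, Finsupp.neg_apply]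
  · intro H h; rw [orientedSharp_apply st hst2, H, MonoidAlgebra.coeff_neg, Finsupp.neg_apply]

end Aux
section Aux2
variable {R : Type*} [CommRing R] {G : Type*} [Group G]

lemma sigma_ker_cast {σ : G →* ℤˣ} {n : G} (h : n ∈ σ.ker) : ((σ n : ℤ) : R) = 1 := by
  rw [MonoidHom.mem_ker.mp h]; simp

lemma sigma_not_ker_cast {σ : G →* ℤˣ} {x : G} (h : x ∉ σ.ker) : ((σ x : ℤ) : R) = -1 := by
  rcases Int.units_eq_one_or (σ x) with h1 | h1
  · exact absurd (MonoidHom.mem_ker.mpr h1) h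
  · rw [h1]; simp


lemma MA_sub_apply (a b : MonoidAlgebra R G) (h : G) : (a - b).coeff h = a.coeff h - b.coeff h := rfl
lemma MA_add_apply (a b : MonoidAlgebra R G) (h : G) : (a + b).coeff h = a.coeff h + b.coeff h := rfl
lemma MA_neg_apply (a : MonoidAlgebra R G) (h : G) : (-a).coeff h = -a.coeff h := rfl
lemma MA_smul_apply (r : R) (a : MonoidAlgebra R G) (h : G) : (r • a).coeff h = r * a.coeff h := rfl

/-- The submodule of skew-symmetric elements. -/
def skewSub (st : G → G) (σ : G →* ℤˣ) (R : Type*) [CommRing R] :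
    Submodule R (MonoidAlgebra R G) where
  carrier := {α | ∀ h, ((σ (st h) : ℤ) : R) * α.coeff (st h) = -α.coeff h}
  zero_mem' := by intro h; simp
  add_mem' := by
    intro a b ha hb h
    simp only [MA_add_apply, mul_add, ha h, hb h]; ring
  smul_mem' := by
    intro c a ha h
    simp only [MA_smul_apply]
    rw [mul_left_comm, ha h]; ring

lemma gen1_skew (st : G → G) (hst2 : ∀ g : G, st (st g) = g) (σ : G →* ℤˣ)
    {n : G} (hn : n ∈ σ.ker) (hfix : st n = n) {r : R} (hr : 2 * r = 0) :
    (MonoidAlgebra.single n r : MonoidAlgebra R G) ∈ skewSub st σ R := by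
  intro h
  by_cases hh : h = n
  · subst hh
    have hr' : r = -r := by linear_combination hr
    simp [MonoidAlgebra.single_apply, hfix, sigma_ker_cast hn, ← hr']
  · have h2 : st h ≠ n := fun hc => hh (by rw [← hfix, ← hc, hst2])
    simp [MonoidAlgebra.single_apply, Ne.symm hh, Ne.symm h2]

lemma gen2_skew (st : G → G) (hst2 : ∀ g : G, st (st g) = g) (σ : G →* ℤˣ)
    (hcompat : ∀ g : G, σ (st g) = σ g)
    {n : G} (hn : n ∈ σ.ker) (hfix : st n ≠ n) :
    (MonoidAlgebra.single n (1 : R) - MonoidAlgebra.single (st n) (1 : R)) ∈ skewSub st σ R := by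
  intro h
  by_cases h1 : h = n
  · subst h1
    simp [MA_sub_apply, MonoidAlgebra.single_apply, hcompat, sigma_ker_cast hn,
      hfix, Ne.symm hfix]
  · by_cases h2 : h = st n
    · subst h2
      simp [MA_sub_apply, MonoidAlgebra.single_apply, hst2, hcompat, sigma_ker_cast hn,
        hfix, Ne.symm hfix]
    · have h3 : n ≠ st h := fun hc => h2 (by rw [hc, hst2])
      have h4 : st n ≠ st h := fun hc => h1 (by rw [← hst2 h, ← hc, hst2])
      simp [MA_sub_apply, MonoidAlgebra.single_apply, Ne.symm h1, Ne.symm h2, h3, h4]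

lemma gen3_skew (st : G → G) (hst2 : ∀ g : G, st (st g) = g) (σ : G →* ℤˣ)
    (hcompat : ∀ g : G, σ (st g) = σ g)
    {x : G} (hx : x ∉ σ.ker) (hfix : st x = x) :
    (MonoidAlgebra.single x (1 : R) : MonoidAlgebra R G) ∈ skewSub st σ R := by
  intro h
  by_cases hh : h = x
  · subst hh
    simp [MonoidAlgebra.single_apply, hfix, hcompat, sigma_not_ker_cast hx]
  · have h2 : st h ≠ x := fun hc => hh (by rw [← hfix, ← hc, hst2])
    simp [MonoidAlgebra.single_apply, Ne.symm hh, Ne.symm h2]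

lemma gen4_skew (st : G → G) (hst2 : ∀ g : G, st (st g) = g) (σ : G →* ℤˣ)
    (hcompat : ∀ g : G, σ (st g) = σ g)
    {x : G} (hx : x ∉ σ.ker) (hfix : st x ≠ x) :
    (MonoidAlgebra.single x (1 : R) + MonoidAlgebra.single (st x) (1 : R)) ∈ skewSub st σ R := by
  intro h
  by_cases h1 : h = x
  · subst h1
    simp [MA_add_apply, MonoidAlgebra.single_apply, hcompat, sigma_not_ker_cast hx,
      hfix, Ne.symm hfix]
  · by_cases h2 : h = st x
    · subst h2
      simp [MA_add_apply, MonoidAlgebra.single_apply, hst2, hcompat, sigma_not_ker_cast hx,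
        hfix, Ne.symm hfix]
    · have h3 : x ≠ st h := fun hc => h2 (by rw [hc, hst2])
      have h4 : st x ≠ st h := fun hc => h1 (by rw [← hst2 h, ← hc, hst2])
      simp [MA_add_apply, MonoidAlgebra.single_apply, Ne.symm h1, Ne.symm h2, h3, h4]

end Aux2
section Main
variable {R : Type*} [CommRing R] {G : Type*} [Group G]

lemma mem_skewSub_iff (st : G → G) (σ : G →* ℤˣ) (α : MonoidAlgebra R G) :
    α ∈ skewSub st σ R ↔ ∀ h, ((σ (st h) : ℤ) : R) * α.coeff (st h) = -α.coeff h := Iff.rfl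

lemma skew_mem_span (st : G → G) (hst2 : ∀ g : G, st (st g) = g) (σ : G →* ℤˣ)
    (hcompat : ∀ g : G, σ (st g) = σ g) (S : Set (MonoidAlgebra R G))
    (hA : ∀ n ∈ σ.ker, st n = n → ∀ r : R, 2 * r = 0 → MonoidAlgebra.single n r ∈ S)
    (hB : ∀ n ∈ σ.ker, st n ≠ n →
      MonoidAlgebra.single n (1:R) - MonoidAlgebra.single (st n) (1:R) ∈ S)
    (hC : ∀ x : G, x ∉ σ.ker → st x = x → MonoidAlgebra.single x (1:R) ∈ S)
    (hD : ∀ x : G, x ∉ σ.ker → st x ≠ x →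
      MonoidAlgebra.single x (1:R) + MonoidAlgebra.single (st x) (1:R) ∈ S)
    (α : MonoidAlgebra R G) (hα : α ∈ skewSub st σ R) :
    α ∈ Submodule.span R S := by
  classical
  obtain ⟨k, hk⟩ : ∃ k, α.coeff.support.card ≤ k := ⟨_, le_rfl⟩
  induction k generalizing α with
  | zero =>
    have h0 : α = 0 := by
      rw [← MonoidAlgebra.coeff_eq_zero, ← Finsupp.support_eq_empty]
      exact Finset.card_eq_zero.mp (Nat.le_zero.mp hk)
    rw [h0]; exact zero_mem _
  | succ k ih =>
    by_cases hα0 : α = 0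
    · rw [hα0]; exact zero_mem _
    obtain ⟨g, hg⟩ := Finsupp.support_nonempty_iff.mpr (mt MonoidAlgebra.coeff_eq_zero.mp hα0)
    have hgne : α.coeff g ≠ 0 := Finsupp.mem_support_iff.mp hg
    have step : ∀ γ : MonoidAlgebra R G, γ ∈ Submodule.span R S →
        γ ∈ skewSub st σ R →
        (∀ h : G, (α - γ).coeff h ≠ 0 → h ≠ g ∧ α.coeff h ≠ 0) →
        α ∈ Submodule.span R S := by
      intro γ hγspan hγskew hsupp
      have hsub : (α - γ).coeff.support ⊆ α.coeff.support.erase g := by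
        intro h hh
        have hx := hsupp h (Finsupp.mem_support_iff.mp hh)
        exact Finset.mem_erase.mpr ⟨hx.1, Finsupp.mem_support_iff.mpr hx.2⟩
      have hcard : (α - γ).coeff.support.card ≤ k := by
        have h1 := Finset.card_le_card hsub
        have h2 := Finset.card_erase_lt_of_mem hg
        omega
      have hskew' : (α - γ) ∈ skewSub st σ R := sub_mem hα hγskew
      have hmem := ih (α - γ) hskew' hcard
      have hrw : α = (α - γ) + γ := by abel
      rw [hrw]; exact add_mem hmem hγspan
    by_cases hker : g ∈ σ.ker
    · by_cases hfix : st g = g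
      · -- Case A
        have hsg := hα g
        rw [hfix, sigma_ker_cast hker, one_mul] at hsg
        have h2r : 2 * α.coeff g = 0 := by linear_combination hsg
        refine step (MonoidAlgebra.single g (α.coeff g))
          (Submodule.subset_span (hA g hker hfix _ h2r))
          (gen1_skew st hst2 σ hker hfix h2r) ?_
        intro h hh
        have hne : h ≠ g := by
          rintro rfl
          exact hh (by simp [MA_sub_apply, MonoidAlgebra.single_apply])
        refine ⟨hne, fun hzero => hh ?_⟩
        simp [MA_sub_apply, MonoidAlgebra.single_apply, hzero, Ne.symm hne]
      · -- Case B
        have hsg := hα g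
        rw [hcompat g, sigma_ker_cast hker, one_mul] at hsg
        refine step (α.coeff g • (MonoidAlgebra.single g (1:R) - MonoidAlgebra.single (st g) (1:R)))
          (Submodule.smul_mem _ _ (Submodule.subset_span (hB g hker hfix)))
          (Submodule.smul_mem _ _ (gen2_skew st hst2 σ hcompat hker hfix)) ?_
        intro h hh
        have hne : h ≠ g := by
          rintro rfl
          apply hh
          rw [MA_sub_apply, MA_smul_apply, MA_sub_apply]
          simp [MonoidAlgebra.single_apply, Ne.symm hfix, hfix]
        have hne2 : h ≠ st g := by
          rintro rfl
          apply hh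
          rw [MA_sub_apply, MA_smul_apply, MA_sub_apply, hsg]
          simp [MonoidAlgebra.single_apply, Ne.symm hfix]
        refine ⟨hne, fun hzero => hh ?_⟩
        rw [MA_sub_apply, MA_smul_apply, MA_sub_apply, hzero]
        simp [MonoidAlgebra.single_apply, Ne.symm hne, Ne.symm hne2]
    · by_cases hfix : st g = g
      · -- Case C
        refine step (α.coeff g • MonoidAlgebra.single g (1:R))
          (Submodule.smul_mem _ _ (Submodule.subset_span (hC g hker hfix)))
          (Submodule.smul_mem _ _ (gen3_skew st hst2 σ hcompat hker hfix)) ?_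
        intro h hh
        have hne : h ≠ g := by
          rintro rfl
          exact hh (by simp [MA_sub_apply, MA_smul_apply, MonoidAlgebra.single_apply])
        refine ⟨hne, fun hzero => hh ?_⟩
        rw [MA_sub_apply, MA_smul_apply, hzero]
        simp [MonoidAlgebra.single_apply, Ne.symm hne]
      · -- Case D
        have hsg := hα g
        rw [hcompat g, sigma_not_ker_cast hker] at hsg
        have hsg' : α.coeff (st g) = α.coeff g := by linear_combination -hsg
        refine step (α.coeff g • (MonoidAlgebra.single g (1:R) + MonoidAlgebra.single (st g) (1:R)))
          (Submodule.smul_mem _ _ (Submodule.subset_span (hD g hker hfix)))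
          (Submodule.smul_mem _ _ (gen4_skew st hst2 σ hcompat hker hfix)) ?_
        intro h hh
        have hne : h ≠ g := by
          rintro rfl
          apply hh
          rw [MA_sub_apply, MA_smul_apply, MA_add_apply]
          simp [MonoidAlgebra.single_apply, Ne.symm hfix, hfix]
        have hne2 : h ≠ st g := by
          rintro rfl
          apply hh
          rw [MA_sub_apply, MA_smul_apply, MA_add_apply, hsg']
          simp [MonoidAlgebra.single_apply, Ne.symm hfix]
        refine ⟨hne, fun hzero => hh ?_⟩
        rw [MA_sub_apply, MA_smul_apply, MA_add_apply, hzero]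
        simp [MonoidAlgebra.single_apply, Ne.symm hne, Ne.symm hne2]

end Main

/-- an element of `RG` is skew-symmetric for the oriented
involution iff it lies in the `R`-span of the four indicated sets. -/
theorem skew_symmetric_characterization {R : Type*} [CommRing R] {G : Type*} [Group G]
    (st : G → G) (hst : ∀ g h : G, st (g * h) = st h * st g)
    (hst2 : ∀ g : G, st (st g) = g)
    (σ : G →* ℤˣ) (hcompat : ∀ g : G, σ (st g) = σ g)
    (hidx : σ.ker.index = 2) (α : MonoidAlgebra R G) :
    orientedSharp st σ α = -α ↔
      α ∈ Submodule.span R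
        (({β | ∃ n ∈ σ.ker, st n = n ∧ ∃ r : R, 2 * r = 0 ∧ β = MonoidAlgebra.single n r} :
            Set (MonoidAlgebra R G)) ∪
         {β | ∃ n ∈ σ.ker, st n ≠ n ∧
            β = MonoidAlgebra.single n (1 : R) - MonoidAlgebra.single (st n) (1 : R)} ∪
         {β | ∃ x : G, x ∉ σ.ker ∧ st x = x ∧ β = MonoidAlgebra.single x (1 : R)} ∪
         {β | ∃ x : G, x ∉ σ.ker ∧ st x ≠ x ∧
            β = MonoidAlgebra.single x (1 : R) + MonoidAlgebra.single (st x) (1 : R)}) := by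
  classical
  rw [skew_iff st hst2]
  constructor
  · intro hskew
    refine skew_mem_span st hst2 σ hcompat _ ?_ ?_ ?_ ?_ α ((mem_skewSub_iff st σ α).mpr hskew)
    · intro n hn hf r hr
      exact Set.mem_union_left _ (Set.mem_union_left _ (Set.mem_union_left _ ⟨n, hn, hf, r, hr, rfl⟩))
    · intro n hn hf
      exact Set.mem_union_left _ (Set.mem_union_left _ (Set.mem_union_right _ ⟨n, hn, hf, rfl⟩))
    · intro x hx hf
      exact Set.mem_union_left _ (Set.mem_union_right _ ⟨x, hx, hf, rfl⟩)
    · intro x hx hf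
      exact Set.mem_union_right _ ⟨x, hx, hf, rfl⟩
  · intro hmem
    refine (mem_skewSub_iff st σ α).mp (Submodule.span_le.mpr ?_ hmem)
    rintro β hβ
    rcases hβ with ((⟨n, hn, hf, r, hr, rfl⟩ | ⟨n, hn, hf, rfl⟩) | ⟨x, hx, hf, rfl⟩) | ⟨x, hx, hf, rfl⟩
    · exact gen1_skew st hst2 σ hn hf hr
    · exact gen2_skew st hst2 σ hcompat hn hf
    · exact gen3_skew st hst2 σ hcompat hx hf
    · exact gen4_skew st hst2 σ hcompat hx hf
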